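/- arXiv:alg-geom/9505009 — 2 statements merged into one kernel-verified Lean document; each statement's English description precedes it below -/
import Mathlib

section
/- Let n ≥ 2 and let W = S_n act on ℂ^n by permuting coordinates. Let V_std = {f : Fin n → ℂ : Σ_i f(i) = 0} be the standard (reflection) representation of S_n. For a subset J ⊆ {1,…,n−1}, let W_J ≤ S_n be the (standard parabolic) subgroup generated by the adjacent transpositions (j, j+1) for j ∈ J. Then a finite-dimensional irreducible complex representation V of S_n satisfies V^{W_J} ≠ 0 for every proper subset J ⊊ {1,…,n−1} if and only if V is isomorphic to the trivial representation or to V_std. (This is the paper's assertion that for the classical groups of type A the reflection representation is the only nontrivial irreducible W-representation occurring in ℤ[W_P\W] for all proper Weyl subgroups W_P, i.e. the distinguished Prym is the only common component.) -/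
/-!
STATEMENT 4: For n ≥ 2, an irreducible complex representation V of S_n has
nonzero W_J-invariants for every proper subset J of the set of adjacent
transpositions if and only if V is the trivial representation or the standard
(reflection) representation {f : Fin n → ℂ | Σ f i = 0}.
-/

open Module

/-- The subspace `V^H` of vectors fixed by every element of a subgroup `H`. -/
def invariantsUnder {W : Type*} [Group W] {Vs : Type*} [AddCommGroup Vs] [Module ℂ Vs]
    (ρ : Representation ℂ W Vs) (H : Subgroup W) : Submodule ℂ Vs where
  carrier := {v | ∀ h ∈ H, ρ h v = v}
  add_mem' := by
    intro a b ha hb h hh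
    simp only [map_add, ha h hh, hb h hh]
  zero_mem' := by
    intro h hh
    simp
  smul_mem' := by
    intro c a ha h hh
    simp only [map_smul, ha h hh]

/-- A representation is irreducible if the space is nonzero and has no nonzero proper
invariant subspace. -/
def IsIrreducibleRep {W : Type*} [Group W] {Vs : Type*} [AddCommGroup Vs] [Module ℂ Vs]
    (ρ : Representation ℂ W Vs) : Prop :=
  (∃ v : Vs, v ≠ 0) ∧
  ∀ U : Submodule ℂ Vs, (∀ g : W, ∀ v ∈ U, ρ g v ∈ U) → U = ⊥ ∨ U = ⊤

/-- The permutation representation of `S_n` on `ℂⁿ`: `(σ • f)(i) = f(σ⁻¹ i)`. -/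
noncomputable def permActionRep (n : ℕ) :
    Representation ℂ (Equiv.Perm (Fin n)) (Fin n → ℂ) where
  toFun σ := LinearMap.funLeft ℂ ℂ ⇑σ⁻¹
  map_one' := by
    ext f i
    simp [LinearMap.funLeft]
  map_mul' := by
    intro σ τ
    ext f i
    simp [LinearMap.funLeft, mul_inv_rev]

/-- The standard representation space: vectors in `ℂⁿ` whose coordinates sum to 0. -/
noncomputable def stdSpace (n : ℕ) : Submodule ℂ (Fin n → ℂ) where
  carrier := {f | ∑ i, f i = 0}
  add_mem' := by
    intro a b ha hb
    simp only [Set.mem_setOf_eq] at ha hb ⊢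
    simp [Finset.sum_add_distrib, ha, hb]
  zero_mem' := by simp
  smul_mem' := by
    intro c a ha
    simp only [Set.mem_setOf_eq] at ha ⊢
    simp [← Finset.mul_sum, ha]

lemma stdSpace_invariant (n : ℕ) (σ : Equiv.Perm (Fin n)) :
    ∀ f ∈ stdSpace n, permActionRep n σ f ∈ stdSpace n := by
  intro f hf
  show ∑ i, (permActionRep n σ f) i = 0
  have h : ∀ i, (permActionRep n σ f) i = f (σ⁻¹ i) := fun _ => rfl
  simp only [h]
  rw [Equiv.sum_comp σ⁻¹ f]
  exact hf

/-- The standard (reflection) representation of `S_n` on `{f : Σ f i = 0}`. -/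
noncomputable def stdRep (n : ℕ) :
    Representation ℂ (Equiv.Perm (Fin n)) (stdSpace n) where
  toFun σ := (permActionRep n σ).restrict (stdSpace_invariant n σ)
  map_one' := by
    refine LinearMap.ext fun v => Subtype.ext ?_
    simp [LinearMap.restrict_apply, map_one]
  map_mul' := by
    intro σ τ
    refine LinearMap.ext fun v => Subtype.ext ?_
    simp [LinearMap.restrict_apply, map_mul]

/-- The standard parabolic subgroup `W_J` of `S_n` generated by the adjacent
transpositions `(j, j+1)` for `j ∈ J` (indices `0 ≤ j < n-1`, zero-based). -/
def adjacentParabolic (n : ℕ) (J : Set ℕ) : Subgroup (Equiv.Perm (Fin n)) :=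
  Subgroup.closure {g | ∃ j ∈ J, ∃ (h1 : j < n) (h2 : j + 1 < n),
    g = Equiv.swap (⟨j, h1⟩ : Fin n) ⟨j + 1, h2⟩}


/-! ### Auxiliary lemmas -/

section Aux

lemma adj_swap_mem {n : ℕ} (J : Set ℕ) {a b : Fin n} (hj : (a : ℕ) ∈ J)
    (hb : (b : ℕ) = a + 1) : Equiv.swap a b ∈ adjacentParabolic n J := by
  apply Subgroup.subset_closure
  refine ⟨(a : ℕ), hj, a.isLt, by rw [← hb]; exact b.isLt, ?_⟩
  congr 1 <;> apply Fin.ext <;> simp [hb]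

def J0 (n : ℕ) : Set ℕ := (↑((Finset.range (n-1)).erase 0) : Set ℕ)

lemma memJ0 {n j : ℕ} (h0 : j ≠ 0) (h1 : j + 1 < n) : j ∈ J0 n := by
  simp only [J0, Finset.coe_erase, Set.mem_diff, Finset.mem_coe, Finset.mem_range,
    Set.mem_singleton_iff]
  omega

lemma swap_mem_parabolic {n : ℕ} {a b : Fin n} (ha : (a : ℕ) ≠ 0) (hb : (b : ℕ) ≠ 0) :
    Equiv.swap a b ∈ adjacentParabolic n (J0 n) := by
  have key : ∀ d : ℕ, ∀ a b : Fin n, (a : ℕ) ≠ 0 → (b : ℕ) = a + 1 + d →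
      Equiv.swap a b ∈ adjacentParabolic n (J0 n) := by
    intro d
    induction d with
    | zero =>
      intro a b ha hb
      have : (a:ℕ) + 1 < n := by have := b.isLt; omega
      exact adj_swap_mem _ (memJ0 ha this) (by omega)
    | succ d ih =>
      intro a b ha hb
      have hm : (a : ℕ) + 1 + d < n := by have := b.isLt; omega
      set m : Fin n := ⟨(a : ℕ) + 1 + d, hm⟩ with hmdef
      have ham : a ≠ m := by
        intro h; have := congrArg Fin.val h; simp [hmdef] at this; omega
      have hab : a ≠ b := fun h => by rw [h] at hb; omega
      have hmb : m ≠ b := fun h => by rw [← h] at hb; simp [hmdef] at hb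
      have h1 : Equiv.swap m b a = a := Equiv.swap_apply_of_ne_of_ne ham hab
      have h2 : Equiv.swap m b m = b := Equiv.swap_apply_left m b
      have key_eq : Equiv.swap a b = Equiv.swap m b * Equiv.swap a m * (Equiv.swap m b)⁻¹ := by
        rw [← Equiv.swap_apply_apply (Equiv.swap m b) a m, h1, h2]
      rw [key_eq]
      have g1 : Equiv.swap a m ∈ adjacentParabolic n (J0 n) := ih a m ha rfl
      have g2 : Equiv.swap m b ∈ adjacentParabolic n (J0 n) :=
        adj_swap_mem _ (memJ0 (by simp [hmdef]) (by simp [hmdef]; omega)) (by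
          simp [hmdef]; omega)
      exact mul_mem (mul_mem g2 g1) (inv_mem g2)
  rcases eq_or_ne a b with rfl | hab
  · simp only [Equiv.swap_self]
    exact (Subgroup.one_mem _ : (Equiv.refl (Fin n) : Equiv.Perm (Fin n)) ∈ _)
  rcases lt_or_gt_of_ne (fun h : (a:ℕ) = b => hab (Fin.ext h)) with h | h
  · exact key ((b : ℕ) - a - 1) a b ha (by omega)
  · rw [Equiv.swap_comm]
    exact key ((a : ℕ) - b - 1) b a hb (by omega)

lemma fix_zero_mem_parabolic {n : ℕ} (hn : 2 ≤ n) {σ : Equiv.Perm (Fin n)}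
    (hσ : σ ⟨0, by omega⟩ = ⟨0, by omega⟩) : σ ∈ adjacentParabolic n (J0 n) := by
  set z : Fin n := ⟨0, by omega⟩ with hz
  have h1 : ∀ x : Fin n, σ x ≠ z ↔ x ≠ z := by
    intro x
    constructor
    · intro hx hc; exact hx (hc ▸ hσ)
    · intro hx hc; exact hx (σ.injective (hc.trans hσ.symm))
  have h2 : ∀ x : Fin n, σ x ≠ x → x ≠ z := by
    intro x hx hc; subst hc; exact hx hσ
  have hof : Equiv.Perm.ofSubtype (σ.subtypePerm h1) = σ :=
    Equiv.Perm.ofSubtype_subtypePerm h1 h2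
  rw [← hof]
  generalize (σ.subtypePerm (p := fun x => x ≠ z) h1) = τ
  refine Equiv.Perm.swap_induction_on τ ?_ ?_
  · rw [map_one]; exact Subgroup.one_mem _
  · intro f x y hxy ihf
    rw [map_mul]
    refine mul_mem ?_ ihf
    rw [Equiv.Perm.ofSubtype_swap_eq]
    exact swap_mem_parabolic (fun h => x.2 (Fin.ext h)) (fun h => y.2 (Fin.ext h))

lemma mem_stdSpace {n : ℕ} (f : Fin n → ℂ) : f ∈ stdSpace n ↔ ∑ i, f i = 0 := Iff.rfl

lemma permActionRep_apply {n : ℕ} (σ : Equiv.Perm (Fin n)) (f : Fin n → ℂ) (i : Fin n) :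
    permActionRep n σ f i = f (σ⁻¹ i) := rfl

lemma permActionRep_single {n : ℕ} (σ : Equiv.Perm (Fin n)) (a : Fin n) :
    permActionRep n σ (Pi.single a 1) = Pi.single (σ a) (1 : ℂ) := by
  funext i
  rw [permActionRep_apply]
  simp only [Pi.single_apply]
  congr 1
  simp only [eq_iff_iff]
  constructor
  · intro h; rw [← h]; simp
  · intro h; rw [h]; simp

lemma exists_perm_map {α : Type*} [DecidableEq α] {a b i j : α} (hab : a ≠ b) (hij : i ≠ j) :
    ∃ σ : Equiv.Perm α, σ a = i ∧ σ b = j := by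
  refine ⟨Equiv.swap (Equiv.swap a i b) j * Equiv.swap a i, ?_, ?_⟩
  · have h1 : Equiv.swap a i b ≠ i := by
      intro h
      have h2 := congrArg (Equiv.swap a i) h
      simp at h2
      exact hab h2.symm
    simp only [Equiv.Perm.mul_apply, Equiv.swap_apply_left]
    exact Equiv.swap_apply_of_ne_of_ne (Ne.symm h1) hij
  · simp only [Equiv.Perm.mul_apply]
    exact Equiv.swap_apply_left _ _

lemma decomp_mem_std {n : ℕ} (hn : n ≠ 0) (f : Fin n → ℂ) :
    f - ((∑ i, f i) / n) • (fun _ => 1 : Fin n → ℂ) ∈ stdSpace n := by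
  rw [mem_stdSpace]
  have hcast : (n : ℂ) ≠ 0 := Nat.cast_ne_zero.mpr hn
  simp only [Pi.sub_apply, Pi.smul_apply, smul_eq_mul, mul_one]
  rw [Finset.sum_sub_distrib, Finset.sum_const, Finset.card_univ, Fintype.card_fin]
  field_simp
  rw [nsmul_eq_mul, mul_div_cancel₀ _ hcast, sub_self]

lemma one_decomp {n : ℕ} (f : Fin n → ℂ) :
    f = ((∑ i, f i) / n) • (fun _ => 1 : Fin n → ℂ)
      + (f - ((∑ i, f i) / n) • (fun _ => 1 : Fin n → ℂ)) := by ring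

lemma classify {n : ℕ} (hn : 2 ≤ n) (U : Submodule ℂ (Fin n → ℂ))
    (hU : ∀ g : Equiv.Perm (Fin n), ∀ f ∈ U, permActionRep n g f ∈ U) :
    U = ⊥ ∨ U = Submodule.span ℂ {(fun _ => 1 : Fin n → ℂ)} ∨ U = stdSpace n ∨ U = ⊤ := by
  have hn0 : n ≠ 0 := by omega
  have z : Fin n := ⟨0, by omega⟩
  by_cases hconst : ∀ f ∈ U, ∀ i j : Fin n, f i = f j
  · have hle : U ≤ Submodule.span ℂ {(fun _ => 1 : Fin n → ℂ)} := by
      intro f hf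
      rw [Submodule.mem_span_singleton]
      exact ⟨f z, by funext i; simp [hconst f hf z i]⟩
    rcases eq_or_ne U ⊥ with h | h
    · exact Or.inl h
    · refine Or.inr (Or.inl (le_antisymm hle ?_))
      obtain ⟨f, hf, hf0⟩ := Submodule.exists_mem_ne_zero_of_ne_bot h
      have hfz : f z ≠ 0 := by
        intro h0
        apply hf0
        funext i
        rw [hconst f hf i z, h0]
        simp
      have hone : (fun _ => 1 : Fin n → ℂ) ∈ U := by
        have := U.smul_mem (f z)⁻¹ hf
        have heq : (f z)⁻¹ • f = (fun _ => 1 : Fin n → ℂ) := by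
          funext i
          simp [hconst f hf i z, inv_mul_cancel₀ hfz]
        rwa [heq] at this
      rw [Submodule.span_le]
      exact Set.singleton_subset_iff.mpr hone
  · push_neg at hconst
    obtain ⟨f, hf, a, b, hfab⟩ := hconst
    have hab : a ≠ b := fun h => hfab (h ▸ rfl)
    have hsingles : ∀ i j : Fin n, (Pi.single i 1 - Pi.single j 1 : Fin n → ℂ) ∈ U := by
      intro i j
      rcases eq_or_ne i j with rfl | hij
      · simpa using U.zero_mem
      obtain ⟨σ, hσa, hσb⟩ := exists_perm_map hab hij
      have hg : f - permActionRep n (Equiv.swap a b) f ∈ U :=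
        U.sub_mem hf (hU _ f hf)
      have hgeq : f - permActionRep n (Equiv.swap a b) f
          = (f a - f b) • (Pi.single a 1 - Pi.single b 1 : Fin n → ℂ) := by
        funext i
        simp only [Pi.sub_apply, permActionRep_apply, Equiv.swap_inv, Pi.smul_apply,
          smul_eq_mul, Pi.single_apply]
        rcases eq_or_ne i a with rfl | hia
        · rw [Equiv.swap_apply_left]
          simp [hab, hab.symm]
        rcases eq_or_ne i b with rfl | hib
        · rw [Equiv.swap_apply_right]
          simp [hab, hab.symm]
        · rw [Equiv.swap_apply_of_ne_of_ne hia hib]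
          simp [hia, hib]
      have hD : (Pi.single a 1 - Pi.single b 1 : Fin n → ℂ) ∈ U := by
        have hne : f a - f b ≠ 0 := sub_ne_zero_of_ne hfab
        have := U.smul_mem (f a - f b)⁻¹ hg
        rw [hgeq, smul_smul, inv_mul_cancel₀ hne, one_smul] at this
        exact this
      have := hU σ _ hD
      rwa [map_sub, permActionRep_single, permActionRep_single, hσa, hσb] at this
    have hstd : stdSpace n ≤ U := by
      intro g hg
      have hrep : g = ∑ i, g i • (Pi.single i 1 - Pi.single z 1 : Fin n → ℂ) := by
        have h1 : ∑ i, g i • (Pi.single i (1:ℂ) : Fin n → ℂ) = g := by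
          funext j
          simp [Finset.sum_apply, Pi.single_apply]
        have h2 : ∑ i, g i • (Pi.single z (1:ℂ) : Fin n → ℂ) = 0 := by
          rw [← Finset.sum_smul, (mem_stdSpace g).mp hg, zero_smul]
        calc g = (∑ i, g i • (Pi.single i (1:ℂ) : Fin n → ℂ))
                  - ∑ i, g i • (Pi.single z (1:ℂ) : Fin n → ℂ) := by
              rw [h1, h2, sub_zero]
          _ = ∑ i, g i • (Pi.single i 1 - Pi.single z 1 : Fin n → ℂ) := by
              rw [← Finset.sum_sub_distrib]
              congr 1
              funext i
              rw [smul_sub]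
      rw [hrep]
      exact Submodule.sum_mem U fun i _ => U.smul_mem _ (hsingles i z)
    by_cases hle : U ≤ stdSpace n
    · exact Or.inr (Or.inr (Or.inl (le_antisymm hle hstd)))
    · refine Or.inr (Or.inr (Or.inr ?_))
      rw [SetLike.le_def] at hle
      push_neg at hle
      obtain ⟨g, hg, hgs⟩ := hle
      have hsum : ∑ i, g i ≠ 0 := fun h => hgs ((mem_stdSpace g).mpr h)
      have hone : (fun _ => 1 : Fin n → ℂ) ∈ U := by
        have hmem : g - ((∑ i, g i) / n) • (fun _ => 1 : Fin n → ℂ) ∈ U :=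
          hstd (decomp_mem_std hn0 g)
        have hc : ((∑ i, g i) / n) • (fun _ => 1 : Fin n → ℂ) ∈ U := by
          have := U.sub_mem hg hmem
          simpa using this
        have hcne : ((∑ i, g i) / (n:ℂ)) ≠ 0 :=
          div_ne_zero hsum (Nat.cast_ne_zero.mpr hn0)
        have := U.smul_mem ((∑ i, g i) / (n:ℂ))⁻¹ hc
        rwa [smul_smul, inv_mul_cancel₀ hcne, one_smul] at this
      rw [eq_top_iff]
      intro h _
      rw [one_decomp (n := n) h]
      exact U.add_mem (U.smul_mem _ hone) (hstd (decomp_mem_std hn0 h))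

/-- The Frobenius-reciprocity map `ℂⁿ → V` built from a `Stab(z)`-fixed vector. -/
noncomputable def frobMap {n : ℕ} {Vs : Type*} [AddCommGroup Vs] [Module ℂ Vs]
    (ρ : Representation ℂ (Equiv.Perm (Fin n)) Vs) (z : Fin n) (v : Vs) :
    (Fin n → ℂ) →ₗ[ℂ] Vs where
  toFun f := ∑ i, f i • ρ (Equiv.swap z i) v
  map_add' f g := by simp [add_smul, Finset.sum_add_distrib]
  map_smul' c f := by
    simp only [Pi.smul_apply, smul_eq_mul, RingHom.id_apply]
    rw [Finset.smul_sum]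
    simp [smul_smul]

end Aux

lemma J0_coe (n : ℕ) : (↑((Finset.range (n-1)).erase 0) : Set ℕ) = J0 n := rfl

/-- An irreducible representation of `S_n` has nonzero invariants
under every proper standard parabolic subgroup iff it is trivial or standard. -/
theorem statement4 (n : ℕ) (hn : 2 ≤ n)
    (Vs : Type*) [AddCommGroup Vs] [Module ℂ Vs] [FiniteDimensional ℂ Vs]
    (ρ : Representation ℂ (Equiv.Perm (Fin n)) Vs) (hirr : IsIrreducibleRep ρ) :
    (∀ J : Finset ℕ, J ⊂ Finset.range (n - 1) →
        invariantsUnder ρ (adjacentParabolic n ↑J) ≠ ⊥)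
      ↔ ((∃ e : Vs ≃ₗ[ℂ] ℂ, ∀ g v, e (ρ g v) = e v) ∨
         (∃ e : Vs ≃ₗ[ℂ] stdSpace n, ∀ g v, e (ρ g v) = stdRep n g (e v))) := by
  have hn0 : n ≠ 0 := by omega
  set z : Fin n := ⟨0, by omega⟩ with hzdef
  constructor
  · -- Forward direction
    intro hJ
    have hss : (Finset.range (n-1)).erase 0 ⊂ Finset.range (n-1) :=
      Finset.erase_ssubset (Finset.mem_range.mpr (by omega))
    have hne := hJ _ hss
    obtain ⟨v, hv, hv0⟩ := Submodule.exists_mem_ne_zero_of_ne_bot hne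
    have hfix0 : ∀ σ : Equiv.Perm (Fin n), σ z = z → ρ σ v = v := by
      intro σ hσ
      exact hv σ (by rw [J0_coe]; exact fix_zero_mem_parabolic hn hσ)
    set Φ := frobMap ρ z v with hΦdef
    have hΦapply : ∀ f, Φ f = ∑ i, f i • ρ (Equiv.swap z i) v := fun f => rfl
    have hswap : ∀ (g : Equiv.Perm (Fin n)) (x : Fin n),
        ρ (Equiv.swap z (g x)) v = ρ g (ρ (Equiv.swap z x) v) := by
      intro g x
      have hτz : ((Equiv.swap z (g x))⁻¹ * (g * Equiv.swap z x)) z = z := by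
        simp only [Equiv.Perm.mul_apply, Equiv.swap_inv]
        rw [Equiv.swap_apply_left, Equiv.swap_apply_right]
      have h1 := hfix0 _ hτz
      have h2 := congrArg (ρ (Equiv.swap z (g x))) h1
      rw [← Module.End.mul_apply, ← map_mul, mul_inv_cancel_left, map_mul,
        Module.End.mul_apply] at h2
      exact h2.symm
    have hequiv : ∀ (g : Equiv.Perm (Fin n)) (f : Fin n → ℂ),
        Φ (permActionRep n g f) = ρ g (Φ f) := by
      intro g f
      rw [hΦapply, hΦapply]
      calc ∑ i, (permActionRep n g f) i • ρ (Equiv.swap z i) v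
          = ∑ x, f (g⁻¹ (g x)) • ρ (Equiv.swap z (g x)) v :=
            (Fintype.sum_equiv g _ _ (fun x => rfl)).symm
        _ = ∑ x, f x • ρ g (ρ (Equiv.swap z x) v) := by
            refine Finset.sum_congr rfl fun x _ => ?_
            rw [Equiv.Perm.inv_def, Equiv.symm_apply_apply, hswap]
        _ = ρ g (∑ x, f x • ρ (Equiv.swap z x) v) := by
            rw [map_sum]
            simp [map_smul]
    have hΦz : Φ (Pi.single z 1) = v := by
      rw [hΦapply, Finset.sum_eq_single z]
      · simp only [Pi.single_eq_same, one_smul, Equiv.swap_self]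
        show ρ 1 v = v
        rw [map_one, Module.End.one_apply]
      · intro b _ hb
        simp [Pi.single_eq_of_ne hb]
      · intro h; exact absurd (Finset.mem_univ z) h
    have hrange : LinearMap.range Φ = ⊤ := by
      rcases hirr.2 (LinearMap.range Φ) (by
        rintro g u ⟨f, rfl⟩
        exact ⟨permActionRep n g f, hequiv g f⟩) with h | h
      · exfalso
        have : v ∈ LinearMap.range Φ := ⟨Pi.single z 1, hΦz⟩
        rw [h] at this
        exact hv0 (by simpa using this)
      · exact h
    have hkerinv : ∀ g : Equiv.Perm (Fin n), ∀ f ∈ LinearMap.ker Φ,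
        permActionRep n g f ∈ LinearMap.ker Φ := by
      intro g f hf
      rw [LinearMap.mem_ker] at hf ⊢
      rw [hequiv, hf, map_zero]
    rcases classify hn _ hkerinv with hker | hker | hker | hker
    · -- ker = ⊥ : impossible
      exfalso
      have hinj : Function.Injective Φ := LinearMap.ker_eq_bot.mp hker
      set o : Fin n := ⟨1, by omega⟩ with hodef
      have hzo : z ≠ o := by
        intro h; have := congrArg Fin.val h; simp [hzdef, hodef] at this
      have hdmem : (Pi.single z 1 - Pi.single o 1 : Fin n → ℂ) ∈ stdSpace n := by
        rw [mem_stdSpace]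
        simp [Finset.sum_sub_distrib]
      rcases hirr.2 (Submodule.map Φ (stdSpace n)) (by
        rintro g u ⟨f, hfs, rfl⟩
        exact ⟨permActionRep n g f, stdSpace_invariant n g f hfs, hequiv g f⟩) with h | h
      · have hm : Φ (Pi.single z 1 - Pi.single o 1) ∈ Submodule.map Φ (stdSpace n) :=
          ⟨_, hdmem, rfl⟩
        rw [h] at hm
        have hd0 : (Pi.single z 1 - Pi.single o 1 : Fin n → ℂ) = 0 :=
          hinj (by rw [(by simpa using hm : Φ _ = 0), map_zero])
        have := congrFun hd0 z
        rw [Pi.sub_apply, Pi.single_eq_same, Pi.single_eq_of_ne hzo, sub_zero] at this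
        exact one_ne_zero this
      · have hm : Φ (fun _ => 1 : Fin n → ℂ) ∈ Submodule.map Φ (stdSpace n) := by
          rw [h]; trivial
        obtain ⟨f, hfs, hfe⟩ := hm
        have hf1 : f = (fun _ => 1 : Fin n → ℂ) := hinj hfe
        have hsum := (mem_stdSpace f).mp hfs
        rw [hf1] at hsum
        simp [Finset.card_univ] at hsum
        exact hn0 hsum
    · -- ker = span{1} : V ≅ std
      right
      set Φ' : (stdSpace n) →ₗ[ℂ] Vs := Φ.comp (stdSpace n).subtype with hΦ'def
      have hΦ'app : ∀ x : stdSpace n, Φ' x = Φ ↑x := fun x => rfl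
      have hone_ker : ∀ c : ℂ, Φ (c • (fun _ => 1 : Fin n → ℂ)) = 0 := by
        intro c
        have : c • (fun _ => 1 : Fin n → ℂ) ∈ LinearMap.ker Φ := by
          rw [hker]
          exact Submodule.smul_mem _ c (Submodule.mem_span_singleton_self _)
        exact LinearMap.mem_ker.mp this
      have hbij : Function.Bijective Φ' := by
        constructor
        · intro x y hxy
          have hsub : (↑x - ↑y : Fin n → ℂ) ∈ LinearMap.ker Φ := by
            rw [LinearMap.mem_ker, map_sub, ← hΦ'app, ← hΦ'app, hxy, sub_self]
          rw [hker, Submodule.mem_span_singleton] at hsub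
          obtain ⟨c, hc⟩ := hsub
          have hsum : ∑ i, (↑x - ↑y : Fin n → ℂ) i = 0 :=
            (mem_stdSpace _).mp ((stdSpace n).sub_mem x.2 y.2)
          rw [← hc] at hsum
          simp only [Pi.smul_apply, smul_eq_mul, mul_one, Finset.sum_const,
            Finset.card_univ, Fintype.card_fin, nsmul_eq_mul] at hsum
          have hc0 : c = 0 := by
            rcases mul_eq_zero.mp hsum with h | h
            · exact absurd (Nat.cast_eq_zero.mp h) hn0
            · exact h
          have : (↑x - ↑y : Fin n → ℂ) = 0 := by rw [← hc, hc0, zero_smul]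
          exact Subtype.ext (sub_eq_zero.mp this)
        · intro u
          obtain ⟨f, hfu⟩ := LinearMap.range_eq_top.mp hrange u
          refine ⟨⟨f - ((∑ i, f i)/n) • (fun _ => 1 : Fin n → ℂ), decomp_mem_std hn0 f⟩, ?_⟩
          rw [hΦ'app]
          show Φ (f - _) = u
          rw [map_sub, hone_ker, sub_zero, hfu]
      refine ⟨(LinearEquiv.ofBijective Φ' hbij).symm, ?_⟩
      intro g u
      set e := (LinearEquiv.ofBijective Φ' hbij).symm with hedef
      have key : ρ g u = Φ' (stdRep n g (e u)) := by
        have hx : Φ' (e u) = u := (LinearEquiv.ofBijective Φ' hbij).apply_symm_apply u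
        have hcoe : (↑(stdRep n g (e u)) : Fin n → ℂ) = permActionRep n g ↑(e u) := rfl
        rw [hΦ'app, hcoe, hequiv, ← hΦ'app, hx]
      rw [key]
      exact (LinearEquiv.ofBijective Φ' hbij).symm_apply_apply _
    · -- ker = std : V trivial
      left
      have honev : Φ (fun _ => 1 : Fin n → ℂ) ≠ 0 := by
        intro h0
        have hmem : (fun _ => 1 : Fin n → ℂ) ∈ LinearMap.ker Φ := LinearMap.mem_ker.mpr h0
        rw [hker, mem_stdSpace] at hmem
        simp [Finset.card_univ] at hmem
        exact hn0 hmem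
      have hsurj : ∀ u : Vs, ∃ f, Φ f = u := fun u =>
        LinearMap.range_eq_top.mp hrange u
      have htriv : ∀ g u, ρ g u = u := by
        intro g u
        obtain ⟨f, rfl⟩ := hsurj u
        have hmem : permActionRep n g f - f ∈ LinearMap.ker Φ := by
          rw [hker, mem_stdSpace]
          simp only [Pi.sub_apply, permActionRep_apply]
          rw [Finset.sum_sub_distrib]
          rw [show ∑ i, f (g⁻¹ i) = ∑ i, f i from Equiv.sum_comp (g⁻¹ : Equiv.Perm (Fin n)) f]
          exact sub_self _
        have h2 := LinearMap.mem_ker.mp hmem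
        rw [map_sub, sub_eq_zero] at h2
        rw [← hequiv, h2]
      have hu1 : ∀ u : Vs, ∃ c : ℂ, u = c • Φ (fun _ => 1 : Fin n → ℂ) := by
        intro u
        obtain ⟨f, rfl⟩ := hsurj u
        refine ⟨(∑ i, f i)/n, ?_⟩
        have hd : f - ((∑ i, f i)/n) • (fun _ => 1 : Fin n → ℂ) ∈ LinearMap.ker Φ := by
          rw [hker]; exact decomp_mem_std hn0 f
        have h2 := LinearMap.mem_ker.mp hd
        rw [map_sub, sub_eq_zero] at h2
        rw [h2, map_smul]
      set ψ : ℂ →ₗ[ℂ] Vs := LinearMap.toSpanSingleton ℂ Vs (Φ (fun _ => 1 : Fin n → ℂ))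
        with hψdef
      have hψapp : ∀ c : ℂ, ψ c = c • Φ (fun _ => 1 : Fin n → ℂ) := fun c =>
        LinearMap.toSpanSingleton_apply ℂ Vs _ c
      have hψbij : Function.Bijective ψ := by
        constructor
        · intro c d hcd
          rw [hψapp, hψapp] at hcd
          have : (c - d) • Φ (fun _ => 1 : Fin n → ℂ) = 0 := by
            rw [sub_smul, hcd, sub_self]
          rcases smul_eq_zero.mp this with h | h
          · exact sub_eq_zero.mp h
          · exact absurd h honev
        · intro u
          obtain ⟨c, hc⟩ := hu1 u
          exact ⟨c, by rw [hψapp, ← hc]⟩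
      exact ⟨(LinearEquiv.ofBijective ψ hψbij).symm, fun g u => by rw [htriv g u]⟩
    · -- ker = ⊤ : impossible
      exfalso
      have h0 : Φ = 0 := LinearMap.ker_eq_top.mp hker
      rw [h0] at hΦz
      exact hv0 (by simpa using hΦz.symm)
  · -- Backward direction
    intro hiso J hJss
    rcases hiso with ⟨e, he⟩ | ⟨e, he⟩
    · obtain ⟨v, hv0⟩ := hirr.1
      have htriv : ∀ g u, ρ g u = u := fun g u => e.injective (he g u)
      exact (Submodule.ne_bot_iff _).mpr ⟨v, fun h _ => htriv h v, hv0⟩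
    · obtain ⟨k, hkmem, hknot⟩ := Finset.exists_of_ssubset hJss
      rw [Finset.mem_range] at hkmem
      set W : ℕ → ℂ := fun j => if j ≤ k then ((n - k - 1 : ℕ) : ℂ) else -((k+1 : ℕ) : ℂ)
        with hWdef
      set w : Fin n → ℂ := fun i => W ↑i with hwdef
      have hwsum : w ∈ stdSpace n := by
        rw [mem_stdSpace]
        have h1 : ∑ i, w i = ∑ j ∈ Finset.range n, W j :=
          Fin.sum_univ_eq_sum_range W n
        rw [h1, Finset.range_eq_Ico,
          ← Finset.sum_Ico_consecutive _ (Nat.zero_le (k+1)) (by omega)]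
        have h2 : ∑ j ∈ Finset.Ico 0 (k+1), W j = (k+1) • ((n - k - 1 : ℕ) : ℂ) := by
          rw [Finset.sum_congr rfl (fun j hj => ?_), Finset.sum_const, Nat.card_Ico,
            Nat.sub_zero]
          rw [hWdef]
          simp only
          rw [if_pos (by have := Finset.mem_Ico.mp hj; omega)]
        have h3 : ∑ j ∈ Finset.Ico (k+1) n, W j = (n - (k+1)) • (-((k+1 : ℕ) : ℂ)) := by
          rw [Finset.sum_congr rfl (fun j hj => ?_), Finset.sum_const, Nat.card_Ico]
          rw [hWdef]
          simp only
          rw [if_neg (by have := Finset.mem_Ico.mp hj; omega)]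
        rw [h2, h3, nsmul_eq_mul, nsmul_eq_mul]
        have hcast1 : ((n - k - 1 : ℕ) : ℂ) = (n : ℂ) - (k : ℂ) - 1 := by
          rw [Nat.sub_sub, Nat.cast_sub (by omega : k + 1 ≤ n)]
          push_cast
          ring
        have hcast2 : ((n - (k+1) : ℕ) : ℂ) = (n : ℂ) - ((k : ℂ) + 1) := by
          rw [Nat.cast_sub (by omega : k + 1 ≤ n)]
          push_cast
          ring
        rw [hcast1, hcast2]
        push_cast
        ring
      have hwfix : ∀ h ∈ adjacentParabolic n (↑J : Set ℕ), permActionRep n h w = w := by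
        have hle : adjacentParabolic n (↑J : Set ℕ) ≤
            { carrier := {σ : Equiv.Perm (Fin n) | permActionRep n σ w = w}
              one_mem' := by
                show permActionRep n 1 w = w
                rw [map_one, Module.End.one_apply]
              mul_mem' := by
                intro a b ha hb
                show permActionRep n (a * b) w = w
                rw [map_mul, Module.End.mul_apply]
                rw [show permActionRep n b w = w from hb, show permActionRep n a w = w from ha]
              inv_mem' := by
                intro a ha
                show permActionRep n a⁻¹ w = w
                conv_lhs => rw [← show permActionRep n a w = w from ha]
                rw [← Module.End.mul_apply, ← map_mul, inv_mul_cancel, map_one,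
                  Module.End.one_apply] } := by
          rw [adjacentParabolic, Subgroup.closure_le]
          rintro g ⟨j, hjJ, hj1, hj2, rfl⟩
          have hjJ' : j ∈ J := hjJ
          have hjk : j ≠ k := fun h => hknot (h ▸ hjJ')
          have hjr : j < n - 1 := Finset.mem_range.mp (hJss.1 hjJ')
          show permActionRep n (Equiv.swap ⟨j, hj1⟩ ⟨j+1, hj2⟩) w = w
          funext i
          rw [permActionRep_apply, Equiv.swap_inv]
          have hcond : ((Equiv.swap (⟨j, hj1⟩ : Fin n) ⟨j+1, hj2⟩ i : Fin n) : ℕ) ≤ k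
              ↔ (i : ℕ) ≤ k := by
            rcases eq_or_ne i ⟨j, hj1⟩ with rfl | hij
            · rw [Equiv.swap_apply_left]; simp; omega
            rcases eq_or_ne i ⟨j+1, hj2⟩ with rfl | hij2
            · rw [Equiv.swap_apply_right]; simp; omega
            · rw [Equiv.swap_apply_of_ne_of_ne hij hij2]
          show W _ = W _
          rw [hWdef]
          simp only
          exact if_congr hcond rfl rfl
        exact fun h hh => hle hh
      have hwne : w ≠ 0 := by
        intro h0
        have := congrFun h0 z
        rw [hwdef] at this
        simp only [hWdef, hzdef, Pi.zero_apply] at this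
        rw [if_pos (Nat.zero_le k)] at this
        have : n - k - 1 = 0 := Nat.cast_eq_zero.mp this
        omega
      refine (Submodule.ne_bot_iff _).mpr ⟨e.symm ⟨w, hwsum⟩, ?_, ?_⟩
      · intro h hh
        apply e.injective
        rw [he, e.apply_symm_apply]
        exact Subtype.ext (hwfix h hh)
      · intro h0
        rw [LinearEquiv.map_eq_zero_iff] at h0
        exact hwne (congrArg Subtype.val h0)
end

section
/- Let n ≥ 2, let T ⊂ SL(n, ℂ) be the subgroup of diagonal matrices of determinant 1, and let N be the normalizer of T in SL(n, ℂ). Then every element of N is a monomial matrix, the map π : N → S_n sending a monomial matrix to its underlying permutation is a surjective group homomorphism with kernel T (so N/T ≅ W = S_n), and there exists a group homomorphism s : S_n → N with π ∘ s = id if and only if n is odd. (This expresses the paper's assertion that the extension class [N] ∈ H²(W, T) vanishes for SL(2n+1) but is nonzero for SL(2n).) -/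
/-!
STATEMENT 7: For n ≥ 2, let T ⊂ SL(n, ℂ) be the diagonal subgroup and N its
normalizer. Every element of N is a monomial matrix; the map π : N → S_n sending a
monomial matrix to its underlying permutation is a surjective homomorphism with
kernel T (so N/T ≅ S_n); and π admits a group-theoretic splitting s : S_n → N with
π ∘ s = id if and only if n is odd.
-/

open Matrix

/-- The subgroup `T` of diagonal matrices in `SL(n, ℂ)`. -/
def diagSubgroupSL (n : ℕ) : Subgroup (Matrix.SpecialLinearGroup (Fin n) ℂ) where
  carrier := {g | ∀ i j : Fin n, i ≠ j → (g : Matrix (Fin n) (Fin n) ℂ) i j = 0}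
  one_mem' := by
    intro i j hij
    show (((1 : Matrix.SpecialLinearGroup (Fin n) ℂ)) : Matrix (Fin n) (Fin n) ℂ) i j = 0
    rw [Matrix.SpecialLinearGroup.coe_one, Matrix.one_apply_ne hij]
  mul_mem' := by
    intro a b ha hb i j hij
    show ((a * b : Matrix.SpecialLinearGroup (Fin n) ℂ) : Matrix (Fin n) (Fin n) ℂ) i j = 0
    rw [Matrix.SpecialLinearGroup.coe_mul, Matrix.mul_apply]
    apply Finset.sum_eq_zero
    intro k _
    by_cases hk : k = j
    · subst hk
      rw [ha i k hij, zero_mul]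
    · rw [hb k j hk, mul_zero]
  inv_mem' := by
    intro g hg i j hij
    have hAB : (g : Matrix (Fin n) (Fin n) ℂ) *
        ((g⁻¹ : Matrix.SpecialLinearGroup (Fin n) ℂ) : Matrix (Fin n) (Fin n) ℂ) = 1 := by
      rw [← Matrix.SpecialLinearGroup.coe_mul, mul_inv_cancel, Matrix.SpecialLinearGroup.coe_one]
    have hBA : ((g⁻¹ : Matrix.SpecialLinearGroup (Fin n) ℂ) : Matrix (Fin n) (Fin n) ℂ) *
        (g : Matrix (Fin n) (Fin n) ℂ) = 1 := by
      rw [← Matrix.SpecialLinearGroup.coe_mul, inv_mul_cancel, Matrix.SpecialLinearGroup.coe_one]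
    have hAjj : (g : Matrix (Fin n) (Fin n) ℂ) j j ≠ 0 := by
      intro h0
      have h1 : ((g : Matrix (Fin n) (Fin n) ℂ) *
          ((g⁻¹ : Matrix.SpecialLinearGroup (Fin n) ℂ) : Matrix (Fin n) (Fin n) ℂ)) j j = 1 := by
        rw [hAB, Matrix.one_apply_eq]
      rw [Matrix.mul_apply] at h1
      have h2 : ∑ k, (g : Matrix (Fin n) (Fin n) ℂ) j k *
          ((g⁻¹ : Matrix.SpecialLinearGroup (Fin n) ℂ) : Matrix (Fin n) (Fin n) ℂ) k j = 0 := by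
        apply Finset.sum_eq_zero
        intro k _
        by_cases hk : k = j
        · subst hk
          rw [h0, zero_mul]
        · rw [hg j k (fun hjk => hk hjk.symm), zero_mul]
      rw [h2] at h1
      exact one_ne_zero h1.symm
    have h3 : (((g⁻¹ : Matrix.SpecialLinearGroup (Fin n) ℂ) : Matrix (Fin n) (Fin n) ℂ) *
        (g : Matrix (Fin n) (Fin n) ℂ)) i j = 0 := by
      rw [hBA, Matrix.one_apply_ne hij]
    rw [Matrix.mul_apply] at h3
    have h4 : ∑ k, ((g⁻¹ : Matrix.SpecialLinearGroup (Fin n) ℂ) : Matrix (Fin n) (Fin n) ℂ) i k *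
        (g : Matrix (Fin n) (Fin n) ℂ) k j
        = ((g⁻¹ : Matrix.SpecialLinearGroup (Fin n) ℂ) : Matrix (Fin n) (Fin n) ℂ) i j *
          (g : Matrix (Fin n) (Fin n) ℂ) j j := by
      apply Finset.sum_eq_single
      · intro k _ hk
        rw [hg k j hk, mul_zero]
      · intro hj
        exact absurd (Finset.mem_univ j) hj
    rw [h4] at h3
    exact (mul_eq_zero.mp h3).resolve_right hAjj

/-- A monomial matrix in `SL(n, ℂ)`: exactly one nonzero entry in each row and each
column. -/
def IsMonomialSL (n : ℕ) (g : Matrix.SpecialLinearGroup (Fin n) ℂ) : Prop :=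
  (∀ i : Fin n, ∃! j : Fin n, (g : Matrix (Fin n) (Fin n) ℂ) i j ≠ 0) ∧
  (∀ j : Fin n, ∃! i : Fin n, (g : Matrix (Fin n) (Fin n) ℂ) i j ≠ 0)


open Fin.NatCast Fin.CommRing

namespace St7
variable {n : ℕ}

abbrev SLn (n : ℕ) := Matrix.SpecialLinearGroup (Fin n) ℂ

def monMat (σ : Equiv.Perm (Fin n)) (d : Fin n → ℂ) : Matrix (Fin n) (Fin n) ℂ :=
  Matrix.of fun i j => if i = σ j then d j else 0

lemma monMat_apply (σ : Equiv.Perm (Fin n)) (d : Fin n → ℂ) (i j : Fin n) :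
    monMat σ d i j = if i = σ j then d j else 0 := rfl

lemma monMat_mul (σ τ : Equiv.Perm (Fin n)) (d e : Fin n → ℂ) :
    monMat σ d * monMat τ e = monMat (σ * τ) (fun j => d (τ j) * e j) := by
  ext i j
  rw [Matrix.mul_apply, Finset.sum_eq_single (τ j)]
  · simp [monMat_apply, Equiv.Perm.mul_apply]
    exact if_congr Iff.rfl rfl rfl
  · intro m _ hm
    simp [monMat_apply, hm]
  · exact fun h => absurd (Finset.mem_univ _) h

lemma monMat_one_one : (monMat 1 (fun _ => 1) : Matrix (Fin n) (Fin n) ℂ) = 1 := by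
  ext i j
  simp [monMat_apply, Matrix.one_apply]
  exact if_congr Iff.rfl rfl rfl

lemma monMat_eq_perm_mul (σ : Equiv.Perm (Fin n)) (d : Fin n → ℂ) :
    monMat σ d = (Equiv.Perm.permMatrix ℂ σ⁻¹) * Matrix.diagonal d := by
  ext i j
  rw [Matrix.mul_diagonal]
  simp only [monMat_apply, Equiv.Perm.permMatrix, PEquiv.toMatrix_apply, Equiv.toPEquiv_apply,
    Option.mem_some_iff]
  by_cases h : i = σ j
  · rw [if_pos h, if_pos (by rw [h]; simp), one_mul]
  · rw [if_neg h, if_neg (by intro hc; exact h (by rw [← hc]; simp)), zero_mul]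

lemma det_monMat (σ : Equiv.Perm (Fin n)) (d : Fin n → ℂ) :
    (monMat σ d).det = ((Equiv.Perm.sign σ : ℤ) : ℂ) * ∏ j, d j := by
  rw [monMat_eq_perm_mul, Matrix.det_mul, Matrix.det_permutation, Matrix.det_diagonal,
    Equiv.Perm.sign_inv]

lemma monMat_pow (σ : Equiv.Perm (Fin n)) (d : Fin n → ℂ) (k : ℕ) :
    (monMat σ d) ^ k = monMat (σ ^ k) (fun j => ∏ t ∈ Finset.range k, d ((σ ^ t) j)) := by
  induction k with
  | zero => simp [monMat_one_one]
  | succ k ih =>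
      rw [pow_succ, ih, monMat_mul, ← pow_succ]
      have hfun : (fun j => (∏ t ∈ Finset.range k, d ((σ ^ t) (σ j))) * d j)
          = fun j => ∏ t ∈ Finset.range (k + 1), d ((σ ^ t) j) := by
        funext j
        rw [Finset.prod_range_succ' (fun t => d ((σ ^ t) j)) k]
        simp [pow_succ, Equiv.Perm.mul_apply]
      rw [hfun]

lemma pattern_mul {A B : Matrix (Fin n) (Fin n) ℂ} {σ τ : Equiv.Perm (Fin n)}
    (hA : ∀ i j, i ≠ σ j → A i j = 0) (hB : ∀ i j, i ≠ τ j → B i j = 0) :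
    ∀ i j, i ≠ σ (τ j) → (A * B) i j = 0 := by
  intro i j hij
  rw [Matrix.mul_apply]
  apply Finset.sum_eq_zero
  intro m _
  by_cases hm : m = τ j
  · subst hm; rw [hA i _ hij, zero_mul]
  · rw [hB m j hm, mul_zero]

lemma mem_diag {g : SLn n} :
    g ∈ diagSubgroupSL n ↔ ∀ i j : Fin n, i ≠ j → (g : Matrix (Fin n) (Fin n) ℂ) i j = 0 :=
  Iff.rfl

lemma coe_inv_monMat (g : SLn n) (σ : Equiv.Perm (Fin n)) (d : Fin n → ℂ)
    (hg : (g : Matrix (Fin n) (Fin n) ℂ) = monMat σ d) (hd : ∀ j, d j ≠ 0) :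
    ((g⁻¹ : SLn n) : Matrix (Fin n) (Fin n) ℂ) = monMat σ⁻¹ (fun j => (d (σ⁻¹ j))⁻¹) := by
  set W : Matrix (Fin n) (Fin n) ℂ := monMat σ⁻¹ (fun j => (d (σ⁻¹ j))⁻¹) with hW
  have h1 : (g : Matrix (Fin n) (Fin n) ℂ) * W = 1 := by
    rw [hg, hW, monMat_mul]
    ext i j
    rw [monMat_apply, Matrix.one_apply]
    by_cases h : i = j
    · subst h
      rw [if_pos (by simp), mul_inv_cancel₀ (hd _), if_pos rfl]
    · rw [if_neg (by simpa using h), if_neg h]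
  have h2 : ((g⁻¹ : SLn n) : Matrix (Fin n) (Fin n) ℂ) * ((g : Matrix (Fin n) (Fin n) ℂ) * W)
      = ((g⁻¹ : SLn n) : Matrix (Fin n) (Fin n) ℂ) := by rw [h1, mul_one]
  calc ((g⁻¹ : SLn n) : Matrix (Fin n) (Fin n) ℂ)
      = ((g⁻¹ : SLn n) : Matrix (Fin n) (Fin n) ℂ) * ((g : Matrix (Fin n) (Fin n) ℂ) * W) := h2.symm
    _ = (((g⁻¹ * g : SLn n)) : Matrix (Fin n) (Fin n) ℂ) * W := by
        rw [Matrix.SpecialLinearGroup.coe_mul, Matrix.mul_assoc]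
    _ = W := by rw [inv_mul_cancel, Matrix.SpecialLinearGroup.coe_one, Matrix.one_mul]

lemma monMat_pattern {σ : Equiv.Perm (Fin n)} {d : Fin n → ℂ} :
    ∀ i j, i ≠ σ j → monMat σ d i j = 0 := by
  intro i j h
  rw [monMat_apply, if_neg h]

lemma monMat_mem_normalizer (g : SLn n) (σ : Equiv.Perm (Fin n)) (d : Fin n → ℂ)
    (hg : (g : Matrix (Fin n) (Fin n) ℂ) = monMat σ d) (hd : ∀ j, d j ≠ 0) :
    g ∈ (Subgroup.normalizer (diagSubgroupSL n : Set (Matrix.SpecialLinearGroup (Fin n) ℂ))) := by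
  have hginv := coe_inv_monMat g σ d hg hd
  have hpat : ∀ i j, i ≠ σ j → (g : Matrix (Fin n) (Fin n) ℂ) i j = 0 := by
    rw [hg]; exact monMat_pattern
  have hpatinv : ∀ i j, i ≠ σ⁻¹ j → ((g⁻¹ : SLn n) : Matrix (Fin n) (Fin n) ℂ) i j = 0 := by
    rw [hginv]; exact monMat_pattern
  rw [Subgroup.mem_normalizer_iff]
  intro h
  constructor
  · intro hh
    rw [mem_diag]
    intro i j hij
    have hco : ((g * h * g⁻¹ : SLn n) : Matrix (Fin n) (Fin n) ℂ)
        = ((g : Matrix (Fin n) (Fin n) ℂ) * (h : Matrix (Fin n) (Fin n) ℂ))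
          * ((g⁻¹ : SLn n) : Matrix (Fin n) (Fin n) ℂ) := by
      rw [Matrix.SpecialLinearGroup.coe_mul, Matrix.SpecialLinearGroup.coe_mul]
    rw [hco]
    have hmid : ∀ i j, i ≠ (σ * 1) j →
        ((g : Matrix (Fin n) (Fin n) ℂ) * (h : Matrix (Fin n) (Fin n) ℂ)) i j = 0 :=
      pattern_mul hpat (fun i j hij' => (mem_diag.mp hh) i j hij')
    refine pattern_mul hmid hpatinv i j ?_
    simpa using hij
  · intro hh
    rw [mem_diag]
    intro i j hij
    have hrw : h = g⁻¹ * (g * h * g⁻¹) * g := by group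
    have hco : (h : Matrix (Fin n) (Fin n) ℂ)
        = (((g⁻¹ : SLn n) : Matrix (Fin n) (Fin n) ℂ)
            * ((g * h * g⁻¹ : SLn n) : Matrix (Fin n) (Fin n) ℂ))
          * (g : Matrix (Fin n) (Fin n) ℂ) := by
      conv_lhs => rw [hrw]
      rw [Matrix.SpecialLinearGroup.coe_mul, Matrix.SpecialLinearGroup.coe_mul]
    rw [hco]
    have hmid : ∀ i j, i ≠ (σ⁻¹ * 1) j →
        (((g⁻¹ : SLn n) : Matrix (Fin n) (Fin n) ℂ)
          * ((g * h * g⁻¹ : SLn n) : Matrix (Fin n) (Fin n) ℂ)) i j = 0 :=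
      pattern_mul hpatinv (fun i j hij' => (mem_diag.mp hh) i j hij')
    refine pattern_mul hmid hpat i j ?_
    simpa using hij

lemma one_le_prod_real {α : Type*} (s : Finset α) (f : α → ℝ) (h : ∀ i ∈ s, 1 ≤ f i) :
    1 ≤ ∏ i ∈ s, f i := by
  classical
  induction s using Finset.cons_induction with
  | empty => simp
  | cons a s ha ih =>
      rw [Finset.prod_cons]
      have h1 := h a (Finset.mem_cons_self a s)
      have h2 := ih (fun i hi => h i (Finset.mem_cons_of_mem hi))
      nlinarith

lemma exists_perm (hn : 1 ≤ n) (g : SLn n) (hg : g ∈ (Subgroup.normalizer (diagSubgroupSL n : Set (Matrix.SpecialLinearGroup (Fin n) ℂ)))) :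
    ∃ σ : Equiv.Perm (Fin n), ∀ i j, (g : Matrix (Fin n) (Fin n) ℂ) i j ≠ 0 ↔ i = σ j := by
  classical
  -- a diagonal matrix with distinct entries and determinant 1
  set last : Fin n := ⟨n - 1, by omega⟩ with hlast
  set Q : ℂ := ∏ j ∈ Finset.univ.erase last, ((j.val + 2 : ℕ) : ℂ) with hQdef
  have hQnorm : 1 ≤ ‖Q‖ := by
    rw [hQdef, norm_prod]
    apply one_le_prod_real
    intro j _
    rw [Complex.norm_natCast]
    exact_mod_cast Nat.le_add_left 1 (j.val + 1)
  have hQ : Q ≠ 0 := by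
    intro h0
    rw [h0, norm_zero] at hQnorm
    linarith
  set d : Fin n → ℂ := fun j => if j = last then Q⁻¹ else ((j.val + 2 : ℕ) : ℂ) with hd
  have hnorm_big : ∀ j : Fin n, j ≠ last → (2 : ℝ) ≤ ‖d j‖ := by
    intro j hj
    rw [hd]
    simp only [if_neg hj, Complex.norm_natCast]
    exact_mod_cast Nat.le_add_left 2 j.val
  have hdlast : d last = Q⁻¹ := by rw [hd]; simp
  have hnorm_small : ‖d last‖ ≤ 1 := by
    rw [hdlast, norm_inv]
    exact inv_le_one_of_one_le₀ hQnorm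
  have hd_inj : Function.Injective d := by
    intro j k h
    by_cases hj : j = last <;> by_cases hk : k = last
    · rw [hj, hk]
    · exfalso
      rw [hj] at h
      have := hnorm_big k hk
      rw [← h] at this
      linarith [hnorm_small]
    · exfalso
      rw [hk] at h
      have := hnorm_big j hj
      rw [h] at this
      linarith [hnorm_small]
    · rw [hd] at h
      simp only [if_neg hj, if_neg hk, Nat.cast_inj] at h
      exact Fin.ext (by omega)
  have hd_prod : ∏ j, d j = 1 := by
    rw [← Finset.prod_erase_mul Finset.univ d (Finset.mem_univ last)]
    have h1 : ∏ j ∈ Finset.univ.erase last, d j = Q := by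
      rw [hQdef]
      apply Finset.prod_congr rfl
      intro j hj
      rw [hd]
      simp only [if_neg (Finset.ne_of_mem_erase hj)]
    rw [h1, hdlast]
    exact mul_inv_cancel₀ hQ
  set D : SLn n := ⟨Matrix.diagonal d, by rw [Matrix.det_diagonal]; exact hd_prod⟩ with hD
  have hDT : D ∈ diagSubgroupSL n := by
    rw [mem_diag]
    intro i j hij
    exact Matrix.diagonal_apply_ne d hij
  have hD' : g * D * g⁻¹ ∈ diagSubgroupSL n := (Subgroup.mem_normalizer_iff.mp hg D).mp hDT
  set e : Fin n → ℂ := fun i => ((g * D * g⁻¹ : SLn n) : Matrix (Fin n) (Fin n) ℂ) i i with he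
  have key : ∀ i j, (g : Matrix (Fin n) (Fin n) ℂ) i j * d j = e i * (g : Matrix (Fin n) (Fin n) ℂ) i j := by
    intro i j
    have hgrp : (g * D * g⁻¹) * g = g * D := by group
    have hmat : ((g * D * g⁻¹ : SLn n) : Matrix (Fin n) (Fin n) ℂ) * (g : Matrix (Fin n) (Fin n) ℂ)
        = (g : Matrix (Fin n) (Fin n) ℂ) * Matrix.diagonal d := by
      rw [← Matrix.SpecialLinearGroup.coe_mul, hgrp, Matrix.SpecialLinearGroup.coe_mul]
    have hLHS : (((g * D * g⁻¹ : SLn n) : Matrix (Fin n) (Fin n) ℂ) * (g : Matrix (Fin n) (Fin n) ℂ)) i j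
        = e i * (g : Matrix (Fin n) (Fin n) ℂ) i j := by
      rw [Matrix.mul_apply]
      exact Finset.sum_eq_single i
        (fun m _ hm => by rw [(mem_diag.mp hD') i m (fun h => hm h.symm), zero_mul])
        (fun h => absurd (Finset.mem_univ _) h)
    rw [← hLHS, hmat, Matrix.mul_diagonal]
  have row_unique : ∀ i j k, (g : Matrix (Fin n) (Fin n) ℂ) i j ≠ 0 →
      (g : Matrix (Fin n) (Fin n) ℂ) i k ≠ 0 → j = k := by
    intro i j k hj hk
    apply hd_inj
    have h1 : d j = e i := by
      have := key i j
      rw [mul_comm (e i)] at this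
      exact mul_left_cancel₀ hj this
    have h2 : d k = e i := by
      have := key i k
      rw [mul_comm (e i)] at this
      exact mul_left_cancel₀ hk this
    rw [h1, h2]
  have row_exists : ∀ i, ∃ j, (g : Matrix (Fin n) (Fin n) ℂ) i j ≠ 0 := by
    intro i
    by_contra hcon
    push_neg at hcon
    have := Matrix.det_eq_zero_of_row_eq_zero i hcon
    rw [g.2] at this
    exact one_ne_zero this
  have col_exists : ∀ j, ∃ i, (g : Matrix (Fin n) (Fin n) ℂ) i j ≠ 0 := by
    intro j
    by_contra hcon
    push_neg at hcon
    have := Matrix.det_eq_zero_of_column_eq_zero j hcon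
    rw [g.2] at this
    exact one_ne_zero this
  set f : Fin n → Fin n := fun i => Classical.choose (row_exists i) with hf
  have hfspec : ∀ i, (g : Matrix (Fin n) (Fin n) ℂ) i (f i) ≠ 0 :=
    fun i => Classical.choose_spec (row_exists i)
  have hsurj : Function.Surjective f := by
    intro j
    obtain ⟨i, hi⟩ := col_exists j
    exact ⟨i, (row_unique i (f i) j (hfspec i) hi)⟩
  have hinj : Function.Injective f := Finite.injective_iff_surjective.mpr hsurj
  set σ₀ : Equiv.Perm (Fin n) := Equiv.ofBijective f ⟨hinj, hsurj⟩ with hσ₀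
  refine ⟨σ₀.symm, ?_⟩
  intro i j
  constructor
  · intro hne
    have : j = f i := row_unique i j (f i) hne (hfspec i)
    rw [this]
    exact (Equiv.symm_apply_apply σ₀ i).symm
  · intro hij
    have : f i = j := by
      have := congrArg σ₀ hij
      rwa [Equiv.apply_symm_apply] at this
    rw [← this]
    exact hfspec i

noncomputable def permOf (hn : 1 ≤ n) (g : ↥(Subgroup.normalizer (diagSubgroupSL n : Set (Matrix.SpecialLinearGroup (Fin n) ℂ)))) :
    Equiv.Perm (Fin n) :=
  Classical.choose (exists_perm hn g.1 g.2)

lemma permOf_spec (hn : 1 ≤ n) (g : ↥(Subgroup.normalizer (diagSubgroupSL n : Set (Matrix.SpecialLinearGroup (Fin n) ℂ)))) :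
    ∀ i j, ((g : SLn n) : Matrix (Fin n) (Fin n) ℂ) i j ≠ 0 ↔ i = permOf hn g j :=
  Classical.choose_spec (exists_perm hn g.1 g.2)

lemma permOf_unique (hn : 1 ≤ n) (g : ↥(Subgroup.normalizer (diagSubgroupSL n : Set (Matrix.SpecialLinearGroup (Fin n) ℂ)))) (σ : Equiv.Perm (Fin n))
    (h : ∀ i j, ((g : SLn n) : Matrix (Fin n) (Fin n) ℂ) i j ≠ 0 ↔ i = σ j) :
    permOf hn g = σ := by
  apply Equiv.ext
  intro j
  have h1 : ((g : SLn n) : Matrix (Fin n) (Fin n) ℂ) (permOf hn g j) j ≠ 0 :=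
    (permOf_spec hn g _ j).mpr rfl
  exact (h _ j).mp h1

noncomputable def piHom (hn : 1 ≤ n) :
    ↥(Subgroup.normalizer (diagSubgroupSL n : Set (Matrix.SpecialLinearGroup (Fin n) ℂ))) →* Equiv.Perm (Fin n) where
  toFun := permOf hn
  map_one' := by
    apply permOf_unique hn
    intro i j
    have hco : (((1 : ↥(Subgroup.normalizer (diagSubgroupSL n : Set (Matrix.SpecialLinearGroup (Fin n) ℂ)))) : SLn n) : Matrix (Fin n) (Fin n) ℂ) = 1 := by
      simp
    rw [hco]
    constructor
    · intro h
      by_contra hc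
      exact h (Matrix.one_apply_ne hc)
    · intro h
      have h' : i = j := h
      subst h'
      rw [Matrix.one_apply_eq]
      exact one_ne_zero
  map_mul' := by
    intro g h
    apply permOf_unique hn
    intro i j
    have hco : (((g * h : ↥(Subgroup.normalizer (diagSubgroupSL n : Set (Matrix.SpecialLinearGroup (Fin n) ℂ)))) : SLn n) : Matrix (Fin n) (Fin n) ℂ)
        = ((g : SLn n) : Matrix (Fin n) (Fin n) ℂ) * ((h : SLn n) : Matrix (Fin n) (Fin n) ℂ) := by
      rw [Subgroup.coe_mul, Matrix.SpecialLinearGroup.coe_mul]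
    rw [hco, Matrix.mul_apply]
    have hsum : ∑ m, ((g : SLn n) : Matrix (Fin n) (Fin n) ℂ) i m
          * ((h : SLn n) : Matrix (Fin n) (Fin n) ℂ) m j
        = ((g : SLn n) : Matrix (Fin n) (Fin n) ℂ) i (permOf hn h j)
          * ((h : SLn n) : Matrix (Fin n) (Fin n) ℂ) (permOf hn h j) j :=
      Finset.sum_eq_single _
        (fun m _ hm => by
          have hz : ((h : SLn n) : Matrix (Fin n) (Fin n) ℂ) m j = 0 := by
            by_contra hne
            exact hm ((permOf_spec hn h m j).mp hne)
          rw [hz, mul_zero])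
        (fun hc => absurd (Finset.mem_univ _) hc)
    rw [hsum, mul_ne_zero_iff]
    have hh0 : ((h : SLn n) : Matrix (Fin n) (Fin n) ℂ) (permOf hn h j) j ≠ 0 :=
      (permOf_spec hn h _ j).mpr rfl
    constructor
    · intro hp
      exact (permOf_spec hn g _ _).mp hp.1
    · intro he
      exact ⟨(permOf_spec hn g _ _).mpr he, hh0⟩

lemma piHom_iff (hn : 1 ≤ n) (g : ↥(Subgroup.normalizer (diagSubgroupSL n : Set (Matrix.SpecialLinearGroup (Fin n) ℂ)))) (i j : Fin n) :
    ((g : SLn n) : Matrix (Fin n) (Fin n) ℂ) i j ≠ 0 ↔ i = piHom hn g j :=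
  permOf_spec hn g i j

def eps (σ : Equiv.Perm (Fin n)) : ℂ := ((Equiv.Perm.sign σ : ℤ) : ℂ)

lemma eps_eq_or (σ : Equiv.Perm (Fin n)) : eps σ = 1 ∨ eps σ = -1 := by
  rcases Int.units_eq_one_or (Equiv.Perm.sign σ) with h | h <;>
    [left; right] <;> rw [eps, h] <;> norm_num

lemma eps_ne_zero (σ : Equiv.Perm (Fin n)) : eps σ ≠ 0 := by
  rcases eps_eq_or σ with h | h <;> rw [h] <;> norm_num

lemma eps_sq (σ : Equiv.Perm (Fin n)) : eps σ * eps σ = 1 := by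
  rcases eps_eq_or σ with h | h <;> rw [h] <;> norm_num

lemma eps_mul (σ τ : Equiv.Perm (Fin n)) : eps (σ * τ) = eps σ * eps τ := by
  rw [eps, eps, eps, _root_.map_mul]
  push_cast
  ring

lemma eps_one : eps (1 : Equiv.Perm (Fin n)) = 1 := by
  rw [eps, _root_.map_one]
  norm_num

/-- the lift of `σ` used for surjectivity: entries `1` except a single `sign σ`. -/
def surjD (hn : 1 ≤ n) (σ : Equiv.Perm (Fin n)) : Fin n → ℂ :=
  fun j => if j = ⟨0, by omega⟩ then eps σ else 1

lemma surjD_ne_zero (hn : 1 ≤ n) (σ : Equiv.Perm (Fin n)) (j : Fin n) : surjD hn σ j ≠ 0 := by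
  simp only [surjD]
  split
  · exact eps_ne_zero σ
  · norm_num

lemma det_surj (hn : 1 ≤ n) (σ : Equiv.Perm (Fin n)) :
    (monMat σ (surjD hn σ)).det = 1 := by
  rw [det_monMat]
  have h1 : ∏ j, surjD hn σ j = eps σ := by
    simp only [surjD]
    rw [Finset.prod_ite_eq']
    simp
  rw [h1, ← eps]
  exact eps_sq σ

def surjSL (hn : 1 ≤ n) (σ : Equiv.Perm (Fin n)) : SLn n :=
  ⟨monMat σ (surjD hn σ), det_surj hn σ⟩

lemma surjSL_mem (hn : 1 ≤ n) (σ : Equiv.Perm (Fin n)) :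
    surjSL hn σ ∈ (Subgroup.normalizer (diagSubgroupSL n : Set (Matrix.SpecialLinearGroup (Fin n) ℂ))) :=
  monMat_mem_normalizer _ σ _ rfl (surjD_ne_zero hn σ)

lemma det_split (hodd : Odd n) (σ : Equiv.Perm (Fin n)) :
    (monMat σ (fun _ => eps σ)).det = 1 := by
  obtain ⟨m, hm⟩ := hodd
  subst hm
  rw [det_monMat, ← eps, Finset.prod_const, Finset.card_univ, Fintype.card_fin]
  calc eps σ * eps σ ^ (2 * m + 1) = eps σ ^ (2 * (m + 1)) := by ring
    _ = (eps σ * eps σ) ^ (m + 1) := by rw [pow_mul]; ring_nf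
    _ = 1 := by rw [eps_sq, one_pow]

noncomputable def splitHom (hn : 1 ≤ n) (hodd : Odd n) :
    Equiv.Perm (Fin n) →* ↥(Subgroup.normalizer (diagSubgroupSL n : Set (Matrix.SpecialLinearGroup (Fin n) ℂ))) where
  toFun σ := ⟨⟨monMat σ (fun _ => eps σ), det_split hodd σ⟩,
    monMat_mem_normalizer _ σ _ rfl (fun _ => eps_ne_zero σ)⟩
  map_one' := by
    apply Subtype.ext
    apply Subtype.ext
    show monMat 1 (fun _ => eps (1 : Equiv.Perm (Fin n))) = 1
    rw [show (fun _ : Fin n => eps (1 : Equiv.Perm (Fin n))) = fun _ => (1 : ℂ) by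
      funext; rw [eps_one]]
    exact monMat_one_one
  map_mul' σ τ := by
    apply Subtype.ext
    apply Subtype.ext
    show monMat (σ * τ) (fun _ => eps (σ * τ)) = monMat σ (fun _ => eps σ) * monMat τ (fun _ => eps τ)
    have hc : (fun _ : Fin n => eps (σ * τ)) = fun _ : Fin n => eps σ * eps τ := by
      funext j
      exact eps_mul σ τ
    rw [monMat_mul, hc]

lemma finRotate_pow_apply (m k : ℕ) :
    ∀ i : Fin (m + 1), ((finRotate (m + 1)) ^ k) i = i + (k : Fin (m + 1)) := by
  induction k with
  | zero => intro i; simp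
  | succ k ih =>
      intro i
      rw [pow_succ, Equiv.Perm.mul_apply, finRotate_succ_apply, ih (i + 1), Nat.cast_add_one]
      ring

lemma finRotate_pow_card (m : ℕ) : (finRotate (m + 1)) ^ (m + 1) = 1 := by
  apply Equiv.ext
  intro i
  rw [finRotate_pow_apply, Fin.natCast_self, add_zero]
  rfl

end St7

/-- Every element of the normalizer `N` of the diagonal subgroup
`T ⊂ SL(n, ℂ)` is monomial; the underlying-permutation map `π : N → S_n` is a
surjective homomorphism with kernel `T`; and `π` splits iff `n` is odd. -/
theorem statement7 (n : ℕ) (hn : 2 ≤ n) :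
    (∀ g ∈ (Subgroup.normalizer (diagSubgroupSL n : Set (Matrix.SpecialLinearGroup (Fin n) ℂ))), IsMonomialSL n g) ∧
    (∃ π : ↥(Subgroup.normalizer (diagSubgroupSL n : Set (Matrix.SpecialLinearGroup (Fin n) ℂ))) →* Equiv.Perm (Fin n),
      (∀ (g : ↥(Subgroup.normalizer (diagSubgroupSL n : Set (Matrix.SpecialLinearGroup (Fin n) ℂ)))) (i j : Fin n),
        ((g : Matrix.SpecialLinearGroup (Fin n) ℂ) : Matrix (Fin n) (Fin n) ℂ) i j ≠ 0
          ↔ i = π g j) ∧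
      Function.Surjective π ∧
      π.ker = (diagSubgroupSL n).subgroupOf (Subgroup.normalizer (diagSubgroupSL n : Set (Matrix.SpecialLinearGroup (Fin n) ℂ))) ∧
      ((∃ s : Equiv.Perm (Fin n) →* ↥(Subgroup.normalizer (diagSubgroupSL n : Set (Matrix.SpecialLinearGroup (Fin n) ℂ))),
          ∀ σ, π (s σ) = σ) ↔ Odd n)) := by
  have h1 : 1 ≤ n := by omega
  constructor
  · -- every element of the normalizer is monomial
    intro g hg
    set G : ↥(Subgroup.normalizer (diagSubgroupSL n : Set (Matrix.SpecialLinearGroup (Fin n) ℂ))) := ⟨g, hg⟩ with hG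
    have hiff := St7.piHom_iff h1 G
    set σ := St7.piHom h1 G with hσ
    constructor
    · intro i
      refine ⟨σ⁻¹ i, ?_, ?_⟩
      · exact (hiff i (σ⁻¹ i)).mpr (Equiv.apply_symm_apply σ i).symm
      · intro j hj
        have h2 : i = σ j := (hiff i j).mp hj
        rw [h2]
        exact (Equiv.symm_apply_apply σ j).symm
    · intro j
      refine ⟨σ j, (hiff (σ j) j).mpr rfl, ?_⟩
      intro i hi
      exact (hiff i j).mp hi
  · refine ⟨St7.piHom h1, St7.piHom_iff h1, ?_, ?_, ?_⟩
    · -- surjectivity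
      intro σ
      refine ⟨⟨St7.surjSL h1 σ, St7.surjSL_mem h1 σ⟩, ?_⟩
      apply St7.permOf_unique h1
      intro i j
      show (St7.monMat σ (St7.surjD h1 σ)) i j ≠ 0 ↔ i = σ j
      rw [St7.monMat_apply]
      constructor
      · intro h
        by_contra hc
        rw [if_neg hc] at h
        exact h rfl
      · intro h
        rw [if_pos h]
        exact St7.surjD_ne_zero h1 σ j
    · -- kernel
      ext g
      rw [MonoidHom.mem_ker, Subgroup.mem_subgroupOf]
      constructor
      · intro h
        rw [St7.mem_diag]
        intro i j hij
        by_contra hne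
        have := (St7.piHom_iff h1 g i j).mp hne
        rw [h] at this
        exact hij this
      · intro h
        apply Equiv.ext
        intro j
        have hne : ((g : St7.SLn n) : Matrix (Fin n) (Fin n) ℂ) (St7.piHom h1 g j) j ≠ 0 :=
          (St7.piHom_iff h1 g _ j).mpr rfl
        by_contra hc
        exact hne (St7.mem_diag.mp h _ _ hc)
    · -- splitting iff odd
      constructor
      · rintro ⟨s, hs⟩
        by_contra hodd
        have heven : Even n := Nat.not_odd_iff_even.mp hodd
        obtain ⟨m, rfl⟩ : ∃ m, n = m + 1 := ⟨n - 1, by omega⟩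
        have hmodd : Odd m := by
          rcases heven with ⟨k, hk⟩
          exact ⟨k - 1, by omega⟩
        set σ := finRotate (m + 1) with hσdef
        set g := s σ with hgdef
        have hiff : ∀ i j, ((g : St7.SLn (m + 1)) : Matrix (Fin (m + 1)) (Fin (m + 1)) ℂ) i j ≠ 0
            ↔ i = σ j := by
          intro i j
          rw [St7.piHom_iff h1 g i j, hs σ]
        set d : Fin (m + 1) → ℂ :=
          fun j => ((g : St7.SLn (m + 1)) : Matrix (Fin (m + 1)) (Fin (m + 1)) ℂ) (σ j) j with hd
        have hpat : ((g : St7.SLn (m + 1)) : Matrix (Fin (m + 1)) (Fin (m + 1)) ℂ)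
            = St7.monMat σ d := by
          ext i j
          rw [St7.monMat_apply]
          by_cases hij : i = σ j
          · rw [if_pos hij, hd, hij]
          · rw [if_neg hij]
            by_contra hne
            exact hij ((hiff i j).mp hne)
        -- determinant gives product -1
        have hsign : Equiv.Perm.sign σ = -1 := by
          rw [hσdef, sign_finRotate]
          exact Odd.neg_one_pow hmodd
        have hdet : ((g : St7.SLn (m + 1)) : Matrix (Fin (m + 1)) (Fin (m + 1)) ℂ).det = 1 :=
          (g : St7.SLn (m + 1)).2
        rw [hpat, St7.det_monMat, hsign] at hdet
        have hprodneg : ∏ j, d j = -1 := by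
          have h2 : ((((-1 : ℤˣ) : ℤ)) : ℂ) = -1 := by norm_num
          rw [h2] at hdet
          linear_combination -hdet
        -- the (m+1)-st power gives product 1
        have hpow : g ^ (m + 1) = 1 := by
          rw [hgdef, ← map_pow, St7.finRotate_pow_card, _root_.map_one]
        have hmatpow : (St7.monMat σ d) ^ (m + 1) = 1 := by
          rw [← hpat]
          have h3 : ((g : St7.SLn (m + 1)) : Matrix (Fin (m + 1)) (Fin (m + 1)) ℂ) ^ (m + 1)
              = (((g ^ (m + 1) : ↥(Subgroup.normalizer (diagSubgroupSL (m + 1) : Set (Matrix.SpecialLinearGroup (Fin (m + 1)) ℂ)))) : St7.SLn (m + 1)) :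
                  Matrix (Fin (m + 1)) (Fin (m + 1)) ℂ) := by
            rw [SubgroupClass.coe_pow, Matrix.SpecialLinearGroup.coe_pow]
          rw [h3, hpow]
          simp
        rw [St7.monMat_pow, St7.finRotate_pow_card] at hmatpow
        have hentry := congrFun (congrFun hmatpow 0) 0
        rw [St7.monMat_apply] at hentry
        have h00 : (0 : Fin (m + 1)) = (1 : Equiv.Perm (Fin (m + 1))) 0 := rfl
        rw [if_pos h00, Matrix.one_apply_eq] at hentry
        have horbit : ∀ t : ℕ, (σ ^ t) (0 : Fin (m + 1)) = (t : Fin (m + 1)) := by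
          intro t
          rw [hσdef, St7.finRotate_pow_apply, zero_add]
        have hprodone : ∏ j, d j = 1 := by
          have h4 : ∏ t ∈ Finset.range (m + 1), d ((σ ^ t) 0)
              = ∏ t ∈ Finset.range (m + 1), d ((t : Fin (m + 1))) :=
            Finset.prod_congr rfl (fun t _ => by rw [horbit t])
          have h5 : ∏ t ∈ Finset.range (m + 1), d ((t : Fin (m + 1))) = ∏ j, d j := by
            rw [← Fin.prod_univ_eq_prod_range (fun t => d ((t : ℕ) : Fin (m + 1))) (m + 1)]
            exact Finset.prod_congr rfl (fun j _ => by rw [Fin.cast_val_eq_self])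
          rw [← h5, ← h4, hentry]
        rw [hprodone] at hprodneg
        norm_num at hprodneg
      · intro hodd
        refine ⟨St7.splitHom h1 hodd, ?_⟩
        intro σ
        apply St7.permOf_unique h1
        intro i j
        show (St7.monMat σ (fun _ => St7.eps σ)) i j ≠ 0 ↔ i = σ j
        rw [St7.monMat_apply]
        constructor
        · intro h
          by_contra hc
          rw [if_neg hc] at h
          exact h rfl
        · intro h
          rw [if_pos h]
          exact St7.eps_ne_zero σ
end
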